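/- Let α : [0,1] → [0,∞) be nondecreasing with α ≤ M, and let p ≥ 1. Then the spectral risk measure R_α is M-Lipschitz with respect to the p-Wasserstein distance on probability measures on ℝ with finite p-th moment: |R_α(μ) - R_α(ν)| ≤ M · W_p(μ, ν). -/

import Mathlib

open MeasureTheory Set

/-- Quantile (generalized inverse c.d.f.) of a probability measure on ℝ. -/
noncomputable def quantile (μ : Measure ℝ) (m : ℝ) : ℝ :=
  sInf {x : ℝ | ENNReal.ofReal m ≤ μ (Iic x)}

/-- The spectral risk measure `R_α(μ) = ∫_0^1 F_μ⁻¹(m) α(m) dm`. -/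
noncomputable def specRisk (α : ℝ → ℝ) (μ : Measure ℝ) : ℝ :=
  ∫ m in Icc (0:ℝ) 1, quantile μ m * α m

/-- The `p`-Wasserstein distance between two probability measures on ℝ, defined as
the infimum over couplings of `(∫ |x-y|^p dπ)^(1/p)`. -/
noncomputable def Wp (p : ℝ) (μ ν : Measure ℝ) : ℝ :=
  sInf {w : ℝ | ∃ π : Measure (ℝ × ℝ), IsProbabilityMeasure π ∧
    π.map Prod.fst = μ ∧ π.map Prod.snd = ν ∧
    w = (∫ q : ℝ × ℝ, |q.1 - q.2| ^ p ∂π) ^ (1/p)}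

open scoped ENNReal
section Quantile
variable {μ : Measure ℝ} [IsProbabilityMeasure μ] {m : ℝ}


lemma qset_nonempty (hm : m < 1) : {x : ℝ | ENNReal.ofReal m ≤ μ (Iic x)}.Nonempty := by
  have h1 : Filter.Tendsto (fun x => μ (Iic x)) Filter.atTop (nhds (μ univ)) :=
    tendsto_measure_Iic_atTop μ
  have hlt : ENNReal.ofReal m < μ univ := by
    rw [measure_univ]; exact ENNReal.ofReal_lt_one.mpr hm
  rcases (h1.eventually_const_le hlt).exists with ⟨x, hx⟩
  exact ⟨x, hx⟩

lemma tendsto_Iic_atBot : Filter.Tendsto (fun x : ℝ => μ (Iic x)) Filter.atBot (nhds 0) := by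
  have h : Filter.Tendsto (μ ∘ (Iic : ℝ → Set ℝ)) Filter.atBot (nhds (μ (⋂ x : ℝ, Iic x))) :=
    tendsto_measure_iInter_atBot (fun x => (measurableSet_Iic).nullMeasurableSet)
      (fun a b hab => Iic_subset_Iic.mpr hab) ⟨0, measure_ne_top μ _⟩
  have he : (⋂ x : ℝ, Iic x) = ∅ := by
    ext y; simp only [mem_iInter, mem_Iic, mem_empty_iff_false, iff_false, not_forall]
    exact ⟨y - 1, by linarith⟩
  rw [he, measure_empty] at h
  exact h

lemma qset_bddBelow (hm : 0 < m) : BddBelow {x : ℝ | ENNReal.ofReal m ≤ μ (Iic x)} := by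
  have hpos : (0:ENNReal) < ENNReal.ofReal m := ENNReal.ofReal_pos.mpr hm
  rcases ((tendsto_Iic_atBot (μ := μ)).eventually_lt_const hpos).exists with ⟨x, hx⟩
  refine ⟨x, fun y hy => ?_⟩
  by_contra h
  push_neg at h
  exact absurd (le_trans hy (measure_mono (Iic_subset_Iic.mpr h.le))) (not_le.mpr hx)

lemma quantile_mem (hm : m ∈ Ioo (0:ℝ) 1) :
    ENNReal.ofReal m ≤ μ (Iic (quantile μ m)) := by
  set S := {x : ℝ | ENNReal.ofReal m ≤ μ (Iic x)} with hS
  have hne := qset_nonempty (μ := μ) hm.2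
  have hbd := qset_bddBelow (μ := μ) hm.1
  set a := sInf S with ha
  have hseq : (⋂ n : ℕ, Iic (a + 1 / (n + 1))) = Iic a := by
    ext y
    simp only [mem_iInter, mem_Iic]
    constructor
    · intro h
      by_contra hya
      push_neg at hya
      obtain ⟨n, hn⟩ := exists_nat_one_div_lt (sub_pos.mpr hya)
      exact absurd (h n) (by push_neg; linarith)
    · intro h n
      have hp : (0:ℝ) < 1 / (n+1) := by positivity
      linarith
  have hmem : ∀ n : ℕ, ENNReal.ofReal m ≤ μ (Iic (a + 1 / (n + 1))) := by
    intro n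
    have hlt : a < a + 1 / (n+1) := by
      have : (0:ℝ) < 1 / (n+1 : ℝ) := by positivity
      linarith
    obtain ⟨y, hyS, hy⟩ := Real.lt_sInf_add_pos hne (by positivity : (0:ℝ) < 1/(n+1))
    have : y ≤ a + 1/(n+1) := by rw [ha]; linarith
    exact le_trans hyS (measure_mono (Iic_subset_Iic.mpr this))
  have htend : Filter.Tendsto (fun n : ℕ => μ (Iic (a + 1 / (n + 1)))) Filter.atTop
      (nhds (μ (Iic a))) := by
    rw [← hseq]
    exact tendsto_measure_iInter_atTop (fun n => measurableSet_Iic.nullMeasurableSet)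
      (fun i j hij => Iic_subset_Iic.mpr (by
        have hij' : (i:ℝ) ≤ j := Nat.cast_le.mpr hij
        have h1 : (1:ℝ)/(j+1) ≤ 1/(i+1) := one_div_le_one_div_of_le (by positivity) (by linarith)
        linarith)) ⟨0, measure_ne_top μ _⟩
  have hfin : ENNReal.ofReal m ≤ μ (Iic a) :=
    ge_of_tendsto htend (Filter.Eventually.of_forall hmem)
  exact hfin

lemma quantile_le_iff (hm : m ∈ Ioo (0:ℝ) 1) {t : ℝ} :
    quantile μ m ≤ t ↔ ENNReal.ofReal m ≤ μ (Iic t) := by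
  constructor
  · intro h
    exact le_trans (quantile_mem hm) (measure_mono (Iic_subset_Iic.mpr h))
  · intro h
    exact csInf_le (qset_bddBelow hm.1) h

lemma monotoneOn_quantile : MonotoneOn (quantile μ) (Ioo 0 1) := by
  intro a ha b hb hab
  rw [quantile_le_iff (μ := μ) ha]
  exact le_trans (ENNReal.ofReal_le_ofReal hab) (quantile_mem hb)

end Quantile

lemma clamp_mem (n : ℕ) (m : ℝ) :
    max (1/(n+2):ℝ) (min m (1 - 1/(n+2))) ∈ Ioo (0:ℝ) 1 := by
  have h1 : (0:ℝ) < 1/(n+2) := by positivity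
  have h2 : (1:ℝ)/(n+2) ≤ 1/2 := by
    apply one_div_le_one_div_of_le <;> [norm_num; skip]
    have : (0:ℝ) ≤ n := Nat.cast_nonneg n
    linarith
  constructor
  · exact lt_of_lt_of_le h1 (le_max_left _ _)
  · apply max_lt (by linarith)
    exact lt_of_le_of_lt (min_le_right _ _) (by linarith)

lemma aemeasurable_quantile (μ : Measure ℝ) [IsProbabilityMeasure μ] :
    AEMeasurable (quantile μ) (volume.restrict (Ioo (0:ℝ) 1)) := by
  set f : ℕ → ℝ → ℝ := fun n m => quantile μ (max (1/(n+2):ℝ) (min m (1 - 1/(n+2)))) with hf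
  have hmono : ∀ n, Monotone (f n) := by
    intro n a b hab
    exact monotoneOn_quantile (μ := μ) (clamp_mem n a) (clamp_mem n b)
      (max_le_max (le_refl _) (min_le_min hab (le_refl _)))
  have hmeas : ∀ n, Measurable (f n) := fun n => (hmono n).measurable
  apply aemeasurable_of_tendsto_metrizable_ae Filter.atTop (fun n => (hmeas n).aemeasurable)
  filter_upwards [ae_restrict_mem measurableSet_Ioo] with m hm
  have hev : ∀ᶠ n : ℕ in Filter.atTop, f n m = quantile μ m := by
    obtain ⟨N, hN⟩ := exists_nat_gt (max (1/m) (1/(1-m)))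
    filter_upwards [Filter.eventually_ge_atTop N] with n hn
    have hm1 : (0:ℝ) < m := hm.1
    have hm2 : m < 1 := hm.2
    have hNn : max (1/m) (1/(1-m)) < (n:ℝ) + 2 := by
      have : (N:ℝ) ≤ n := Nat.cast_le.mpr hn
      linarith
    have ha : (1:ℝ)/(n+2) ≤ m := by
      rw [div_le_iff₀ (by positivity)]
      have h1 : 1/m < (n:ℝ)+2 := lt_of_le_of_lt (le_max_left _ _) hNn
      rw [div_lt_iff₀ hm1] at h1
      linarith
    have hb : m ≤ 1 - 1/(n+2:ℝ) := by
      have h1 : 1/(1-m) < (n:ℝ)+2 := lt_of_le_of_lt (le_max_right _ _) hNn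
      rw [div_lt_iff₀ (by linarith)] at h1
      have h2 : 1/(n+2:ℝ) < 1 - m := by
        rw [div_lt_iff₀ (by positivity)]; nlinarith
      linarith
    rw [hf]
    simp only []
    rw [min_eq_left hb, max_eq_right ha]
  exact Filter.Tendsto.congr' (Filter.EventuallyEq.symm hev) tendsto_const_nhds



instance : IsProbabilityMeasure (volume.restrict (Ioo (0:ℝ) 1)) := by
  constructor
  rw [Measure.restrict_apply_univ, Real.volume_Ioo]
  norm_num

lemma map_quantile (μ : Measure ℝ) [IsProbabilityMeasure μ] :
    (volume.restrict (Ioo (0:ℝ) 1)).map (quantile μ) = μ := by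
  have hq := aemeasurable_quantile μ
  have : IsProbabilityMeasure ((volume.restrict (Ioo (0:ℝ) 1)).map (quantile μ)) :=
    Measure.isProbabilityMeasure_map hq
  apply Measure.ext_of_Iic
  intro t
  rw [Measure.map_apply_of_aemeasurable hq measurableSet_Iic,
    Measure.restrict_apply' measurableSet_Ioo]
  set c := (μ (Iic t)).toReal with hc
  have hne : μ (Iic t) ≠ ∞ := measure_ne_top μ _
  have hc0 : 0 ≤ c := ENNReal.toReal_nonneg
  have hc1 : c ≤ 1 := by
    rw [hc]
    exact ENNReal.toReal_le_of_le_ofReal one_pos.le (by simpa using prob_le_one)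
  have hset : quantile μ ⁻¹' (Iic t) ∩ Ioo 0 1 = Iic c ∩ Ioo 0 1 := by
    ext m
    simp only [mem_inter_iff, mem_preimage, mem_Iic, mem_Ioo, and_congr_left_iff]
    intro hm
    rw [quantile_le_iff (μ := μ) hm, ENNReal.ofReal_le_iff_le_toReal hne, ← hc]
  rw [hset]
  rcases lt_or_ge c 1 with h | h
  · have : Iic c ∩ Ioo 0 1 = Ioc 0 c := by
      ext m; simp only [mem_inter_iff, mem_Iic, mem_Ioo, mem_Ioc]
      constructor
      · rintro ⟨h1, h2, h3⟩; exact ⟨h2, h1⟩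
      · rintro ⟨h1, h2⟩; exact ⟨h2, h1, lt_of_le_of_lt h2 h⟩
    rw [this, Real.volume_Ioc, sub_zero, ENNReal.ofReal_toReal hne]
  · have hceq : c = 1 := le_antisymm hc1 h
    have : Iic c ∩ Ioo 0 1 = Ioo 0 1 := by
      rw [hceq]
      ext m; simp only [mem_inter_iff, mem_Iic, mem_Ioo]
      exact ⟨fun h => h.2, fun h => ⟨h.2.le, h⟩⟩
    rw [this, Real.volume_Ioo, sub_zero, ← hceq, ENNReal.ofReal_toReal hne]

lemma integrable_id_of_rpow {μ : Measure ℝ} [IsProbabilityMeasure μ] {p : ℝ} (hp : 1 ≤ p)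
    (hμ : Integrable (fun x => |x| ^ p) μ) : Integrable (fun x : ℝ => x) μ := by
  have hbd : ∀ x : ℝ, ‖x‖ ≤ ‖(1:ℝ) + |x| ^ p‖ := by
    intro x
    have h0 : (0:ℝ) ≤ |x| ^ p := Real.rpow_nonneg (abs_nonneg x) p
    rw [Real.norm_eq_abs, Real.norm_eq_abs, abs_of_nonneg (show (0:ℝ) ≤ 1 + |x| ^ p by linarith)]
    rcases le_or_gt (|x|) 1 with h | h
    · linarith [abs_nonneg x, h]
    · have h2 : |x| ^ (1:ℝ) ≤ |x| ^ p := Real.rpow_le_rpow_of_exponent_le h.le hp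
      rw [Real.rpow_one] at h2
      linarith
  exact ((integrable_const (1:ℝ)).add hμ).mono aestronglyMeasurable_id
    (Filter.Eventually.of_forall hbd)

lemma integrable_quantile (μ : Measure ℝ) [IsProbabilityMeasure μ] {p : ℝ} (hp : 1 ≤ p)
    (hμ : Integrable (fun x => |x| ^ p) μ) :
    Integrable (quantile μ) (volume.restrict (Ioo (0:ℝ) 1)) := by
  have h1 : Integrable (fun x : ℝ => x) μ := integrable_id_of_rpow hp hμ
  rw [← map_quantile μ] at h1
  exact (integrable_map_measure aestronglyMeasurable_id (aemeasurable_quantile μ)).mp h1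



lemma step1 (α : ℝ → ℝ) (M : ℝ) (hα_mono : MonotoneOn α (Icc 0 1))
    (hα_nonneg : ∀ m ∈ Icc (0:ℝ) 1, 0 ≤ α m)
    (hα_bdd : ∀ m ∈ Icc (0:ℝ) 1, α m ≤ M)
    (μ ν : Measure ℝ) [IsProbabilityMeasure μ] [IsProbabilityMeasure ν]
    (hqμ : Integrable (quantile μ) (volume.restrict (Ioo (0:ℝ) 1)))
    (hqν : Integrable (quantile ν) (volume.restrict (Ioo (0:ℝ) 1))) :
    |specRisk α μ - specRisk α ν| ≤
      M * ∫ m in Ioo (0:ℝ) 1, |quantile μ m - quantile ν m| := by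
  have hM0 : 0 ≤ M := le_trans (hα_nonneg 0 (by simp)) (hα_bdd 0 (by simp))
  set β : ℝ → ℝ := fun m => α (max 0 (min m 1)) with hβ
  have hclamp : ∀ m : ℝ, max (0:ℝ) (min m 1) ∈ Icc (0:ℝ) 1 := by
    intro m
    constructor
    · exact le_max_left _ _
    · exact max_le (by norm_num) (min_le_right _ _)
  have hβmono : Monotone β := fun a b hab =>
    hα_mono (hclamp a) (hclamp b) (max_le_max (le_refl _) (min_le_min hab (le_refl _)))
  have hβmeas : Measurable β := hβmono.measurable
  have hβeq : ∀ m ∈ Icc (0:ℝ) 1, β m = α m := by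
    intro m hm
    rw [hβ]; simp only []
    rw [min_eq_left hm.2, max_eq_right hm.1]
  have hβbd : ∀ m : ℝ, 0 ≤ β m ∧ β m ≤ M :=
    fun m => ⟨hα_nonneg _ (hclamp m), hα_bdd _ (hclamp m)⟩
  -- replace Icc by Ioo
  have hres : volume.restrict (Icc (0:ℝ) 1) = volume.restrict (Ioo (0:ℝ) 1) :=
    (Measure.restrict_congr_set Ioo_ae_eq_Icc).symm
  -- integrability
  have hint : ∀ (ξ : Measure ℝ) [IsProbabilityMeasure ξ],
      Integrable (quantile ξ) (volume.restrict (Ioo (0:ℝ) 1)) →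
      Integrable (fun m => quantile ξ m * β m) (volume.restrict (Ioo (0:ℝ) 1)) := by
    intro ξ _ hq
    refine (hq.abs.const_mul M).mono' (hq.aestronglyMeasurable.mul hβmeas.aestronglyMeasurable) ?_
    filter_upwards with m
    rw [Real.norm_eq_abs, abs_mul]
    calc |quantile ξ m| * |β m| ≤ |quantile ξ m| * M := by
          apply mul_le_mul_of_nonneg_left _ (abs_nonneg _)
          rw [abs_of_nonneg (hβbd m).1]; exact (hβbd m).2
      _ = M * |quantile ξ m| := mul_comm _ _
  -- rewrite specRisk as an integral over Ioo with β
  have hsp : ∀ (ξ : Measure ℝ),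
      specRisk α ξ = ∫ m in Ioo (0:ℝ) 1, quantile ξ m * β m := by
    intro ξ
    rw [specRisk, hres]
    apply integral_congr_ae
    filter_upwards [ae_restrict_mem measurableSet_Ioo] with m hm
    rw [hβeq m ⟨hm.1.le, hm.2.le⟩]
  rw [hsp μ, hsp ν, ← integral_sub (hint μ hqμ) (hint ν hqν)]
  have hre : ∀ m : ℝ, quantile μ m * β m - quantile ν m * β m
      = (quantile μ m - quantile ν m) * β m := fun m => by ring
  calc |∫ m in Ioo (0:ℝ) 1, (quantile μ m * β m - quantile ν m * β m)|
      ≤ ∫ m in Ioo (0:ℝ) 1, |quantile μ m * β m - quantile ν m * β m| := by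
        simpa only [Real.norm_eq_abs] using
          norm_integral_le_integral_norm (μ := volume.restrict (Ioo (0:ℝ) 1))
            (fun m => quantile μ m * β m - quantile ν m * β m)
    _ ≤ ∫ m in Ioo (0:ℝ) 1, M * |quantile μ m - quantile ν m| := by
        apply integral_mono_of_nonneg
        · filter_upwards with m; exact abs_nonneg _
        · exact ((hqμ.sub hqν).abs.const_mul M)
        · filter_upwards with m
          rw [hre m, abs_mul, mul_comm M]
          apply mul_le_mul_of_nonneg_left _ (abs_nonneg _)
          rw [abs_of_nonneg (hβbd m).1]; exact (hβbd m).2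
    _ = M * ∫ m in Ioo (0:ℝ) 1, |quantile μ m - quantile ν m| := integral_const_mul M _

def betw (x y : ℝ) : Set ℝ := {t | (x ≤ t ∧ t < y) ∨ (y ≤ t ∧ t < x)}

lemma volume_betw (x y : ℝ) : volume (betw x y) = ENNReal.ofReal |x - y| := by
  rcases le_total x y with h | h
  · have : betw x y = Ico x y := by
      ext t; simp only [betw, mem_setOf_eq, mem_Ico]
      constructor
      · rintro (⟨h1, h2⟩ | ⟨h1, h2⟩); exacts [⟨h1, h2⟩, absurd (lt_of_le_of_lt h1 h2) (by linarith)]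
      · exact fun ht => Or.inl ht
    rw [this, Real.volume_Ico, abs_sub_comm, abs_of_nonneg (by linarith)]
  · have : betw x y = Ico y x := by
      ext t; simp only [betw, mem_setOf_eq, mem_Ico]
      constructor
      · rintro (⟨h1, h2⟩ | ⟨h1, h2⟩); exacts [absurd (lt_of_le_of_lt h1 h2) (by linarith), ⟨h1, h2⟩]
      · exact fun ht => Or.inr ht
    rw [this, Real.volume_Ico, abs_of_nonneg (by linarith)]

lemma measurableSet_betw_prod :
    MeasurableSet {q : (ℝ × ℝ) × ℝ | (q.1.1 ≤ q.2 ∧ q.2 < q.1.2) ∨ (q.1.2 ≤ q.2 ∧ q.2 < q.1.1)} := by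
  apply MeasurableSet.union
  · exact (measurableSet_le (measurable_fst.fst) measurable_snd).inter
      (measurableSet_lt measurable_snd (measurable_fst.snd))
  · exact (measurableSet_le (measurable_fst.snd) measurable_snd).inter
      (measurableSet_lt measurable_snd (measurable_fst.fst))

lemma coupling_lower (π : Measure (ℝ × ℝ)) [IsProbabilityMeasure π]
    (μ ν : Measure ℝ) [IsProbabilityMeasure μ] [IsProbabilityMeasure ν]
    (hfst : π.map Prod.fst = μ) (hsnd : π.map Prod.snd = ν) :
    (∫⁻ t, (μ (Iic t) - ν (Iic t)) ⊔ (ν (Iic t) - μ (Iic t))) ≤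
      ∫⁻ q, ENNReal.ofReal |q.1 - q.2| ∂π := by
  set S := {q : (ℝ × ℝ) × ℝ | (q.1.1 ≤ q.2 ∧ q.2 < q.1.2) ∨ (q.1.2 ≤ q.2 ∧ q.2 < q.1.1)} with hS
  have hSm := measurableSet_betw_prod
  have hfun : AEMeasurable (Function.uncurry fun (q : ℝ × ℝ) (t : ℝ) => S.indicator (1 : (ℝ × ℝ) × ℝ → ℝ≥0∞) (q, t)) (π.prod volume) := by
    have : (Function.uncurry fun (q : ℝ × ℝ) (t : ℝ) => S.indicator (1 : (ℝ × ℝ) × ℝ → ℝ≥0∞) (q, t))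
        = S.indicator 1 := by
      ext ⟨q, t⟩; rfl
    rw [this]
    have hm : Measurable (S.indicator (1 : (ℝ × ℝ) × ℝ → ℝ≥0∞)) :=
      measurable_one.indicator hSm
    exact hm.aemeasurable
  have hrhs : ∫⁻ q, ENNReal.ofReal |q.1 - q.2| ∂π
      = ∫⁻ q, (∫⁻ t, S.indicator 1 (q, t)) ∂π := by
    apply lintegral_congr
    intro q
    have hsec : {t : ℝ | (q, t) ∈ S} = betw q.1 q.2 := rfl
    rw [← volume_betw q.1 q.2, ← hsec]
    rw [← lintegral_indicator_one (by
      have : {t : ℝ | (q, t) ∈ S} = (fun t => (q, t)) ⁻¹' S := rfl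
      rw [this]
      exact hSm.preimage (measurable_const.prodMk measurable_id))]
    rfl
  have hswap : ∫⁻ q, (∫⁻ t, S.indicator 1 (q, t)) ∂π
      = ∫⁻ t, (∫⁻ q, S.indicator 1 (q, t) ∂π) := by
    exact lintegral_lintegral_swap hfun
  rw [hrhs, hswap]
  apply lintegral_mono
  intro t
  have hsecm : MeasurableSet {q : ℝ × ℝ | (q, t) ∈ S} :=
    hSm.preimage (measurable_id.prodMk measurable_const)
  have hind : ∫⁻ q, S.indicator 1 (q, t) ∂π = π {q : ℝ × ℝ | (q, t) ∈ S} := by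
    rw [← lintegral_indicator_one hsecm]
    rfl
  simp only []
  rw [hind]
  set A := {q : ℝ × ℝ | q.1 ≤ t} with hA
  set B := {q : ℝ × ℝ | q.2 ≤ t} with hB
  have hAm : MeasurableSet A := measurableSet_le measurable_fst measurable_const
  have hBm : MeasurableSet B := measurableSet_le measurable_snd measurable_const
  have hπA : π A = μ (Iic t) := by
    rw [← hfst, Measure.map_apply measurable_fst measurableSet_Iic]; rfl
  have hπB : π B = ν (Iic t) := by
    rw [← hsnd, Measure.map_apply measurable_snd measurableSet_Iic]; rfl
  have hsub1 : A \ B ⊆ {q : ℝ × ℝ | (q, t) ∈ S} := by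
    rintro q ⟨h1, h2⟩
    exact Or.inl ⟨h1, not_le.mp h2⟩
  have hsub2 : B \ A ⊆ {q : ℝ × ℝ | (q, t) ∈ S} := by
    rintro q ⟨h1, h2⟩
    exact Or.inr ⟨h1, not_le.mp h2⟩
  have key : ∀ (X Y : Set (ℝ × ℝ)), X \ Y ⊆ {q : ℝ × ℝ | (q, t) ∈ S} →
      π X - π Y ≤ π {q : ℝ × ℝ | (q, t) ∈ S} := by
    intro X Y hsub
    apply tsub_le_iff_right.mpr
    calc π X ≤ π ((X \ Y) ∪ Y) := measure_mono (fun x hx => by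
          by_cases h : x ∈ Y
          · exact Or.inr h
          · exact Or.inl ⟨hx, h⟩)
      _ ≤ π (X \ Y) + π Y := measure_union_le _ _
      _ ≤ π {q : ℝ × ℝ | (q, t) ∈ S} + π Y := by
          exact add_le_add (measure_mono hsub) le_rfl
  rw [← hπA, ← hπB]
  exact sup_le (key A B hsub1) (key B A hsub2)


lemma helper1 {a b : ℝ} (ha : 0 ≤ a) (hab : a ≤ b) (hb : b ≤ 1) :
    volume (Ioc a b ∩ Ioo (0:ℝ) 1) = ENNReal.ofReal (b - a) := by
  apply le_antisymm
  · calc volume (Ioc a b ∩ Ioo (0:ℝ) 1) ≤ volume (Ioc a b) := measure_mono inter_subset_left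
      _ = ENNReal.ofReal (b - a) := Real.volume_Ioc
  · calc ENNReal.ofReal (b - a) = volume (Ioo a b) := Real.volume_Ioo.symm
      _ ≤ volume (Ioc a b ∩ Ioo (0:ℝ) 1) := measure_mono (fun m hm =>
          ⟨⟨hm.1, hm.2.le⟩, ⟨lt_of_le_of_lt ha hm.1, lt_of_lt_of_le hm.2 hb⟩⟩)

lemma helper2 (ξ ρ : Measure ℝ) [IsProbabilityMeasure ξ] [IsProbabilityMeasure ρ] (t : ℝ)
    (h : ρ (Iic t) ≤ ξ (Iic t)) :
    volume (((Iic ((ξ (Iic t)).toReal) \ Iic ((ρ (Iic t)).toReal)) ∪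
        (Iic ((ρ (Iic t)).toReal) \ Iic ((ξ (Iic t)).toReal))) ∩ Ioo (0:ℝ) 1)
      = (ξ (Iic t) - ρ (Iic t)) ⊔ (ρ (Iic t) - ξ (Iic t)) := by
  set a := (ρ (Iic t)).toReal with hA
  set b := (ξ (Iic t)).toReal with hB
  have hξne : ξ (Iic t) ≠ ∞ := measure_ne_top _ _
  have hρne : ρ (Iic t) ≠ ∞ := measure_ne_top _ _
  have hab : a ≤ b := ENNReal.toReal_mono hξne h
  have ha : 0 ≤ a := ENNReal.toReal_nonneg
  have hb : b ≤ 1 := by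
    rw [hB]; exact ENNReal.toReal_le_of_le_ofReal one_pos.le (by simpa using prob_le_one)
  have h1 : Iic b \ Iic a = Ioc a b := by
    ext m; simp only [mem_diff, mem_Iic, mem_Ioc, not_le]
    exact ⟨fun ⟨x, y⟩ => ⟨y, x⟩, fun ⟨x, y⟩ => ⟨y, x⟩⟩
  have h2 : Iic a \ Iic b = ∅ := by
    rw [diff_eq_empty]; exact Iic_subset_Iic.mpr hab
  rw [h1, h2, union_empty, helper1 ha hab hb]
  have h3 : ρ (Iic t) - ξ (Iic t) = 0 := tsub_eq_zero_of_le h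
  rw [h3, sup_eq_left.mpr zero_le]
  rw [hA, hB, ← ENNReal.toReal_sub_of_le h hξne, ENNReal.ofReal_toReal]
  exact (tsub_le_self.trans_lt (lt_of_le_of_ne le_top hξne)).ne

lemma quantile_side (μ ν : Measure ℝ) [IsProbabilityMeasure μ] [IsProbabilityMeasure ν] :
    ∫⁻ m in Ioo (0:ℝ) 1, ENNReal.ofReal |quantile μ m - quantile ν m|
      = ∫⁻ t, (μ (Iic t) - ν (Iic t)) ⊔ (ν (Iic t) - μ (Iic t)) := by
  obtain ⟨gμ, hgμm, hgμe⟩ := aemeasurable_quantile μ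
  obtain ⟨gν, hgνm, hgνe⟩ := aemeasurable_quantile ν
  set T := {q : ℝ × ℝ | (gμ q.2 ≤ q.1 ∧ q.1 < gν q.2) ∨ (gν q.2 ≤ q.1 ∧ q.1 < gμ q.2)} with hT
  have hTm : MeasurableSet T := by
    apply MeasurableSet.union
    · exact (measurableSet_le (hgμm.comp measurable_snd) measurable_fst).inter
        (measurableSet_lt measurable_fst (hgνm.comp measurable_snd))
    · exact (measurableSet_le (hgνm.comp measurable_snd) measurable_fst).inter
        (measurableSet_lt measurable_fst (hgμm.comp measurable_snd))
  -- LHS equals iterated integral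
  have hLHS : ∫⁻ m in Ioo (0:ℝ) 1, ENNReal.ofReal |quantile μ m - quantile ν m|
      = ∫⁻ m in Ioo (0:ℝ) 1, (∫⁻ t, T.indicator 1 (t, m)) := by
    apply lintegral_congr_ae
    filter_upwards [hgμe, hgνe] with m h1 h2
    have hsec : {t : ℝ | (t, m) ∈ T} = betw (gμ m) (gν m) := rfl
    have hpre : MeasurableSet {t : ℝ | (t, m) ∈ T} := by
      have : {t : ℝ | (t, m) ∈ T} = (fun t : ℝ => (t, m)) ⁻¹' T := rfl
      rw [this]; exact hTm.preimage (measurable_id.prodMk measurable_const)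
    have : (∫⁻ t, T.indicator 1 (t, m)) = volume {t : ℝ | (t, m) ∈ T} := by
      rw [← lintegral_indicator_one hpre]
      rfl
    rw [this, hsec, volume_betw, h1, h2]
  rw [hLHS]
  -- swap
  have hunc : AEMeasurable (Function.uncurry fun (t m : ℝ) => T.indicator (1 : ℝ × ℝ → ℝ≥0∞) (t, m))
      (volume.prod (volume.restrict (Ioo (0:ℝ) 1))) := by
    have he : (Function.uncurry fun (t m : ℝ) => T.indicator (1 : ℝ × ℝ → ℝ≥0∞) (t, m))
        = T.indicator 1 := by ext ⟨t, m⟩; rfl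
    rw [he]
    have hm : Measurable (T.indicator (1 : ℝ × ℝ → ℝ≥0∞)) := measurable_one.indicator hTm
    exact hm.aemeasurable
  rw [← lintegral_lintegral_swap hunc]
  -- pointwise in t
  apply lintegral_congr
  intro t
  have hsecm : MeasurableSet {m : ℝ | (t, m) ∈ T} := by
    have : {m : ℝ | (t, m) ∈ T} = (fun m : ℝ => (t, m)) ⁻¹' T := rfl
    rw [this]; exact hTm.preimage (measurable_const.prodMk measurable_id)
  have hind : ∫⁻ m in Ioo (0:ℝ) 1, T.indicator 1 (t, m)
      = (volume.restrict (Ioo (0:ℝ) 1)) {m : ℝ | (t, m) ∈ T} := by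
    rw [← lintegral_indicator_one hsecm]
    rfl
  rw [hind]
  -- replace g's by quantiles (a.e.)
  have hae : {m : ℝ | (t, m) ∈ T} =ᵐ[volume.restrict (Ioo (0:ℝ) 1)]
      {m : ℝ | (quantile μ m ≤ t ∧ t < quantile ν m) ∨ (quantile ν m ≤ t ∧ t < quantile μ m)} := by
    filter_upwards [hgμe, hgνe] with m h1 h2
    simp only [eq_iff_iff, mem_setOf_eq, mem_setOf_eq]
    change (gμ m ≤ t ∧ t < gν m ∨ gν m ≤ t ∧ t < gμ m) ↔
      (quantile μ m ≤ t ∧ t < quantile ν m ∨ quantile ν m ≤ t ∧ t < quantile μ m)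
    rw [h1, h2]
  rw [measure_congr hae, Measure.restrict_apply' measurableSet_Ioo]
  -- use the Galois connection
  have hset : {m : ℝ | (quantile μ m ≤ t ∧ t < quantile ν m) ∨ (quantile ν m ≤ t ∧ t < quantile μ m)}
        ∩ Ioo (0:ℝ) 1
      = (((Iic ((μ (Iic t)).toReal) \ Iic ((ν (Iic t)).toReal)) ∪
        (Iic ((ν (Iic t)).toReal) \ Iic ((μ (Iic t)).toReal))) ∩ Ioo (0:ℝ) 1) := by
    ext m
    simp only [mem_inter_iff, mem_setOf_eq, mem_union, mem_diff, mem_Iic, and_congr_left_iff]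
    intro hm
    have hμi := quantile_le_iff (μ := μ) hm (t := t)
    have hνi := quantile_le_iff (μ := ν) hm (t := t)
    have hμr : ENNReal.ofReal m ≤ μ (Iic t) ↔ m ≤ (μ (Iic t)).toReal :=
      ENNReal.ofReal_le_iff_le_toReal (measure_ne_top _ _)
    have hνr : ENNReal.ofReal m ≤ ν (Iic t) ↔ m ≤ (ν (Iic t)).toReal :=
      ENNReal.ofReal_le_iff_le_toReal (measure_ne_top _ _)
    constructor
    · rintro (⟨h1, h2⟩ | ⟨h1, h2⟩)
      · left
        refine ⟨hμr.mp (hμi.mp h1), fun hc => absurd (hνi.mpr (hνr.mpr hc)) (not_le.mpr h2)⟩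
      · right
        refine ⟨hνr.mp (hνi.mp h1), fun hc => absurd (hμi.mpr (hμr.mpr hc)) (not_le.mpr h2)⟩
    · rintro (⟨h1, h2⟩ | ⟨h1, h2⟩)
      · left
        exact ⟨hμi.mpr (hμr.mpr h1), not_le.mp (fun hc => h2 (hνr.mp (hνi.mp hc)))⟩
      · right
        exact ⟨hνi.mpr (hνr.mpr h1), not_le.mp (fun hc => h2 (hμr.mp (hμi.mp hc)))⟩
  rw [hset]
  rcases le_total (ν (Iic t)) (μ (Iic t)) with h | h
  · exact helper2 μ ν t h
  · rw [union_comm, sup_comm]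
    exact helper2 ν μ t h

lemma coupling_int (π : Measure (ℝ × ℝ)) [IsProbabilityMeasure π]
    (μ ν : Measure ℝ) [IsProbabilityMeasure μ] [IsProbabilityMeasure ν]
    (hfst : π.map Prod.fst = μ) (hsnd : π.map Prod.snd = ν) {p : ℝ} (hp : 1 ≤ p)
    (hμ : Integrable (fun x => |x| ^ p) μ) (hν : Integrable (fun x => |x| ^ p) ν) :
    Integrable (fun q : ℝ × ℝ => |q.1 - q.2| ^ p) π := by
  have hp0 : (0:ℝ) < p := lt_of_lt_of_le one_pos hp
  have h1 : Integrable (fun q : ℝ × ℝ => |q.1| ^ p) π := by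
    rw [← hfst] at hμ
    exact (integrable_map_measure hμ.aestronglyMeasurable measurable_fst.aemeasurable).mp hμ
  have h2 : Integrable (fun q : ℝ × ℝ => |q.2| ^ p) π := by
    rw [← hsnd] at hν
    exact (integrable_map_measure hν.aestronglyMeasurable measurable_snd.aemeasurable).mp hν
  have hcont : Continuous (fun q : ℝ × ℝ => |q.1 - q.2| ^ p) :=
    ((continuous_fst.sub continuous_snd).abs).rpow_const (fun q => Or.inr hp0.le)
  refine ((h1.add h2).const_mul ((2:ℝ) ^ p)).mono' hcont.aestronglyMeasurable ?_
  filter_upwards with q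
  rw [Real.norm_eq_abs, abs_of_nonneg (Real.rpow_nonneg (abs_nonneg _) p)]
  have hb : |q.1 - q.2| ≤ 2 * max |q.1| |q.2| := by
    calc |q.1 - q.2| ≤ |q.1| + |q.2| := abs_sub _ _
      _ ≤ 2 * max |q.1| |q.2| := by
          rcases le_total |q.1| |q.2| with h | h
          · rw [max_eq_right h]; linarith
          · rw [max_eq_left h]; linarith
  calc |q.1 - q.2| ^ p ≤ (2 * max |q.1| |q.2|) ^ p :=
        Real.rpow_le_rpow (abs_nonneg _) hb hp0.le
    _ = 2 ^ p * (max |q.1| |q.2|) ^ p := Real.mul_rpow (by norm_num) (le_max_of_le_left (abs_nonneg _))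
    _ ≤ 2 ^ p * (|q.1| ^ p + |q.2| ^ p) := by
        apply mul_le_mul_of_nonneg_left _ (Real.rpow_nonneg (by norm_num) p)
        rcases le_total |q.1| |q.2| with h | h
        · rw [max_eq_right h]
          have := Real.rpow_nonneg (abs_nonneg q.1) p
          linarith
        · rw [max_eq_left h]
          have := Real.rpow_nonneg (abs_nonneg q.2) p
          linarith

lemma coupling_int_one (π : Measure (ℝ × ℝ)) [IsProbabilityMeasure π] {p : ℝ} (hp : 1 ≤ p)
    (h : Integrable (fun q : ℝ × ℝ => |q.1 - q.2| ^ p) π) :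
    Integrable (fun q : ℝ × ℝ => |q.1 - q.2|) π := by
  have hcont : Continuous (fun q : ℝ × ℝ => |q.1 - q.2|) := by continuity
  refine ((integrable_const (1:ℝ)).add h).mono' hcont.aestronglyMeasurable ?_
  filter_upwards with q
  rw [Real.norm_eq_abs, abs_abs]
  have h0 : (0:ℝ) ≤ |q.1 - q.2| ^ p := Real.rpow_nonneg (abs_nonneg _) p
  show |q.1 - q.2| ≤ 1 + |q.1 - q.2| ^ p
  rcases le_or_gt |q.1 - q.2| 1 with h1 | h1
  · linarith
  · have h2 : |q.1 - q.2| ^ (1:ℝ) ≤ |q.1 - q.2| ^ p := Real.rpow_le_rpow_of_exponent_le h1.le hp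
    rw [Real.rpow_one] at h2
    linarith

lemma jensen_int (π : Measure (ℝ × ℝ)) [IsProbabilityMeasure π] {p : ℝ} (hp : 1 ≤ p)
    (h : Integrable (fun q : ℝ × ℝ => |q.1 - q.2| ^ p) π) :
    (∫ q : ℝ × ℝ, |q.1 - q.2| ∂π) ≤ (∫ q : ℝ × ℝ, |q.1 - q.2| ^ p ∂π) ^ (1/p) := by
  have hp0 : (0:ℝ) < p := lt_of_lt_of_le one_pos hp
  have hint1 : Integrable (fun q : ℝ × ℝ => |q.1 - q.2|) π := coupling_int_one π hp h
  have hj : (∫ q : ℝ × ℝ, |q.1 - q.2| ∂π) ^ p ≤ ∫ q : ℝ × ℝ, |q.1 - q.2| ^ p ∂π := by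
    have hconv : ConvexOn ℝ (Ici 0) (fun x : ℝ => x ^ p) := convexOn_rpow hp
    have hcont : ContinuousOn (fun x : ℝ => x ^ p) (Ici 0) := fun x _ =>
      (Real.continuousAt_rpow_const x p (Or.inr hp0.le)).continuousWithinAt
    have := hconv.map_integral_le hcont isClosed_Ici
      (Filter.Eventually.of_forall fun q => abs_nonneg (q.1 - q.2)) hint1 (by exact h)
    exact this
  have h0 : 0 ≤ ∫ q : ℝ × ℝ, |q.1 - q.2| ∂π :=
    integral_nonneg fun q => abs_nonneg _
  calc (∫ q : ℝ × ℝ, |q.1 - q.2| ∂π)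
      = ((∫ q : ℝ × ℝ, |q.1 - q.2| ∂π) ^ p) ^ (1/p) := by
        rw [one_div, Real.rpow_rpow_inv h0 hp0.ne']
    _ ≤ (∫ q : ℝ × ℝ, |q.1 - q.2| ^ p ∂π) ^ (1/p) :=
        Real.rpow_le_rpow (Real.rpow_nonneg h0 p) hj (by positivity)


lemma key_coupling (μ ν : Measure ℝ) [IsProbabilityMeasure μ] [IsProbabilityMeasure ν]
    {p : ℝ} (hp : 1 ≤ p)
    (hμ : Integrable (fun x => |x| ^ p) μ) (hν : Integrable (fun x => |x| ^ p) ν)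
    (π : Measure (ℝ × ℝ)) [IsProbabilityMeasure π]
    (hfst : π.map Prod.fst = μ) (hsnd : π.map Prod.snd = ν) :
    (∫ m in Ioo (0:ℝ) 1, |quantile μ m - quantile ν m|) ≤
      (∫ q : ℝ × ℝ, |q.1 - q.2| ^ p ∂π) ^ (1/p) := by
  set A := ∫⁻ m in Ioo (0:ℝ) 1, ENNReal.ofReal |quantile μ m - quantile ν m| with hA
  set B := ∫⁻ q : ℝ × ℝ, ENNReal.ofReal |q.1 - q.2| ∂π with hB
  have hAB : A ≤ B := by
    rw [hA, quantile_side μ ν]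
    exact coupling_lower π μ ν hfst hsnd
  have hintp : Integrable (fun q : ℝ × ℝ => |q.1 - q.2| ^ p) π :=
    coupling_int π μ ν hfst hsnd hp hμ hν
  have hint1 : Integrable (fun q : ℝ × ℝ => |q.1 - q.2|) π := coupling_int_one π hp hintp
  have hBfin : B ≠ ∞ := by
    have := hint1.hasFiniteIntegral
    rw [HasFiniteIntegral] at this
    have heq : B = ∫⁻ q : ℝ × ℝ, ‖|q.1 - q.2|‖ₑ ∂π := by
      apply lintegral_congr
      intro q
      rw [← ofReal_norm, Real.norm_eq_abs, abs_abs]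
    rw [heq]
    exact this.ne
  have hqm : AEStronglyMeasurable (fun m => |quantile μ m - quantile ν m|)
      (volume.restrict (Ioo (0:ℝ) 1)) :=
    (((aemeasurable_quantile μ).sub (aemeasurable_quantile ν)).aestronglyMeasurable).norm.congr (Filter.Eventually.of_forall fun m => (Real.norm_eq_abs _))
  have hL : (∫ m in Ioo (0:ℝ) 1, |quantile μ m - quantile ν m|) = A.toReal := by
    rw [hA, integral_eq_lintegral_of_nonneg_ae (Filter.Eventually.of_forall fun m => abs_nonneg _) hqm]
  have hR : (∫ q : ℝ × ℝ, |q.1 - q.2| ∂π) = B.toReal := by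
    rw [hB, integral_eq_lintegral_of_nonneg_ae (Filter.Eventually.of_forall fun q => abs_nonneg _)
      hint1.aestronglyMeasurable]
  calc (∫ m in Ioo (0:ℝ) 1, |quantile μ m - quantile ν m|)
      = A.toReal := hL
    _ ≤ B.toReal := ENNReal.toReal_mono hBfin hAB
    _ = ∫ q : ℝ × ℝ, |q.1 - q.2| ∂π := hR.symm
    _ ≤ (∫ q : ℝ × ℝ, |q.1 - q.2| ^ p ∂π) ^ (1/p) := jensen_int π hp hintp

/-- if `α ≤ M` then `R_α` is `M`-Lipschitz for the `p`-Wasserstein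
distance on probability measures on ℝ with finite `p`-th moment. -/
theorem stmt14 (α : ℝ → ℝ) (M : ℝ) (hα_mono : MonotoneOn α (Icc 0 1))
    (hα_nonneg : ∀ m ∈ Icc (0:ℝ) 1, 0 ≤ α m)
    (hα_bdd : ∀ m ∈ Icc (0:ℝ) 1, α m ≤ M)
    (p : ℝ) (hp : 1 ≤ p)
    (μ ν : Measure ℝ) [IsProbabilityMeasure μ] [IsProbabilityMeasure ν]
    (hμ : Integrable (fun x => |x| ^ p) μ) (hν : Integrable (fun x => |x| ^ p) ν) :
    |specRisk α μ - specRisk α ν| ≤ M * Wp p μ ν := by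
  have hqμ := integrable_quantile μ hp hμ
  have hqν := integrable_quantile ν hp hν
  have hM0 : 0 ≤ M := le_trans (hα_nonneg 0 (by simp)) (hα_bdd 0 (by simp))
  have hstep1 := step1 α M hα_mono hα_nonneg hα_bdd μ ν hqμ hqν
  have hWp : (∫ m in Ioo (0:ℝ) 1, |quantile μ m - quantile ν m|) ≤ Wp p μ ν := by
    apply le_csInf
    · refine ⟨(∫ q : ℝ × ℝ, |q.1 - q.2| ^ p ∂(μ.prod ν)) ^ (1/p), μ.prod ν, inferInstance, ?_, ?_, rfl⟩
      · rw [Measure.map_fst_prod]; simp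
      · rw [Measure.map_snd_prod]; simp
    · rintro w ⟨π, hπ, hfst, hsnd, rfl⟩
      exact key_coupling μ ν hp hμ hν π hfst hsnd
  calc |specRisk α μ - specRisk α ν|
      ≤ M * ∫ m in Ioo (0:ℝ) 1, |quantile μ m - quantile ν m| := hstep1
    _ ≤ M * Wp p μ ν := mul_le_mul_of_nonneg_left hWp hM0
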